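/- arXiv:2402.11864 — 5 statements merged into one kernel-verified Lean document; each statement's English description precedes it below -/
import Mathlib

section
/- For a Gaussian random variable Y ~ N(y, σ_Y²) and independent Gaussian Z ~ N(0, σ_Z²), with γ, σ_Y, σ_Z > 0 and μ, x, C ∈ ℝ, the expectation E[-exp(-γ(x - C + φ(Y)·(μ + Y + Z)))] with φ(Y) = (μ+Y)/(γσ_Z²) equals -exp(-γ(x-C) - (μ+y)²/(2(σ_Y²+σ_Z²)) - (1/2)·log(1 + σ_Y²/σ_Z²)). -/
open MeasureTheory ProbabilityTheory Real

lemma cexp_eq_rexp (b c d : ℝ) (x : ℝ) :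
    Complex.exp (-(b:ℂ) * x ^ 2 + c * x + d) = ((rexp (-b * x ^ 2 + c * x + d) : ℝ) : ℂ) := by
  rw [Complex.ofReal_exp]; congr 1; push_cast; ring

lemma integrable_rexp_quad {b : ℝ} (hb : 0 < b) (c d : ℝ) :
    Integrable (fun x : ℝ ↦ rexp (-b * x ^ 2 + c * x + d)) := by
  have h := (integrable_cexp_quadratic (b := (b : ℂ)) (by simpa using hb) c d).norm
  refine h.congr (Filter.Eventually.of_forall fun x ↦ ?_)
  simp only [cexp_eq_rexp b c d, Complex.norm_real, Real.norm_eq_abs, Real.abs_exp]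

lemma integral_rexp_quad {b : ℝ} (hb : 0 < b) (c d : ℝ) :
    ∫ x : ℝ, rexp (-b * x ^ 2 + c * x + d)
      = Real.sqrt (π / b) * rexp (c ^ 2 / (4 * b) + d) := by
  have h := integral_cexp_quadratic (b := (-b : ℂ)) (by simpa using hb) c d
  rw [show (fun x : ℝ ↦ Complex.exp (-(b:ℂ) * x ^ 2 + (c:ℂ) * x + (d:ℂ)))
      = fun x : ℝ ↦ ((rexp (-b * x ^ 2 + c * x + d) : ℝ) : ℂ) from funext (cexp_eq_rexp b c d),
    show (fun x : ℝ ↦ ((rexp (-b * x ^ 2 + c * x + d) : ℝ) : ℂ))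
      = fun x ↦ (RCLike.ofReal (K := ℂ) (rexp (-b * x ^ 2 + c * x + d))) from rfl,
    integral_ofReal] at h
  have h3 : ((π : ℂ) / -(-(b:ℂ))) ^ (1 / 2 : ℂ) = ((Real.sqrt (π / b) : ℝ) : ℂ) := by
    rw [neg_neg, Real.sqrt_eq_rpow, Complex.ofReal_cpow (by positivity)]
    push_cast; norm_num
  have h4 : Complex.exp ((d : ℂ) - c ^ 2 / (4 * -(b:ℂ)))
      = ((rexp (c ^ 2 / (4 * b) + d) : ℝ) : ℂ) := by
    rw [Complex.ofReal_exp]; congr 1; push_cast; field_simp; ring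
  rw [h3, h4, ← Complex.ofReal_mul] at h
  exact Complex.ofReal_injective h

lemma var_ne_zero {σ : ℝ} (hσ : 0 < σ) : (⟨σ ^ 2, sq_nonneg σ⟩ : NNReal) ≠ 0 := by
  intro h
  have : σ ^ 2 = 0 := congrArg NNReal.toReal h
  nlinarith

lemma integral_gauss_eq (m σ : ℝ) (hσ : 0 < σ) (g : ℝ → ℝ) :
    ∫ x, g x ∂(gaussianReal m ⟨σ ^ 2, sq_nonneg σ⟩)
      = ∫ x, gaussianPDFReal m ⟨σ ^ 2, sq_nonneg σ⟩ x * g x := by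
  rw [gaussianReal_of_var_ne_zero m (var_ne_zero hσ)]; unfold gaussianPDF
  have : (fun x ↦ ENNReal.ofReal (gaussianPDFReal m ⟨σ ^ 2, sq_nonneg σ⟩ x))
      = fun x ↦ ((Real.toNNReal (gaussianPDFReal m ⟨σ ^ 2, sq_nonneg σ⟩ x) : NNReal) : ENNReal) :=
    rfl
  rw [this, integral_withDensity_eq_integral_smul
    (measurable_gaussianPDFReal m ⟨σ ^ 2, sq_nonneg σ⟩).real_toNNReal g]
  congr 1; ext x
  rw [NNReal.smul_def, smul_eq_mul, Real.coe_toNNReal _ (gaussianPDFReal_nonneg m ⟨σ ^ 2, sq_nonneg σ⟩ x)]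

lemma integrable_gauss_iff (m σ : ℝ) (hσ : 0 < σ) (g : ℝ → ℝ) :
    Integrable g (gaussianReal m ⟨σ ^ 2, sq_nonneg σ⟩)
      ↔ Integrable (fun x ↦ gaussianPDFReal m ⟨σ ^ 2, sq_nonneg σ⟩ x * g x) := by
  rw [gaussianReal_of_var_ne_zero m (var_ne_zero hσ)]; unfold gaussianPDF
  have : (fun x ↦ ENNReal.ofReal (gaussianPDFReal m ⟨σ ^ 2, sq_nonneg σ⟩ x))
      = fun x ↦ ((Real.toNNReal (gaussianPDFReal m ⟨σ ^ 2, sq_nonneg σ⟩ x) : NNReal) : ENNReal) :=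
    rfl
  rw [this, integrable_withDensity_iff_integrable_smul
    (measurable_gaussianPDFReal m ⟨σ ^ 2, sq_nonneg σ⟩).real_toNNReal]
  constructor <;> intro h <;> refine h.congr (Filter.Eventually.of_forall fun x ↦ ?_) <;>
    simp [NNReal.smul_def, Real.coe_toNNReal _ (gaussianPDFReal_nonneg m ⟨σ ^ 2, sq_nonneg σ⟩ x)]

lemma pdf_mul_exp (m σ : ℝ) (hσ : 0 < σ) (a b c x : ℝ) :
    gaussianPDFReal m ⟨σ ^ 2, sq_nonneg σ⟩ x * rexp (a * x ^ 2 + b * x + c)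
      = (Real.sqrt (2 * π * σ ^ 2))⁻¹
        * rexp (-(1 / (2 * σ ^ 2) - a) * x ^ 2 + (b + m / σ ^ 2) * x
            + (c - m ^ 2 / (2 * σ ^ 2))) := by
  unfold gaussianPDFReal
  erw [NNReal.coe_mk]
  rw [mul_assoc, ← Real.exp_add]
  congr 2
  have : σ ^ 2 ≠ 0 := by positivity
  field_simp
  ring

lemma integral_gauss_exp_quad (m σ : ℝ) (hσ : 0 < σ) {a : ℝ} (b c : ℝ)
    (ha : a < 1 / (2 * σ ^ 2)) :
    ∫ x, rexp (a * x ^ 2 + b * x + c) ∂(gaussianReal m ⟨σ ^ 2, sq_nonneg σ⟩)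
      = (Real.sqrt (2 * π * σ ^ 2))⁻¹ * (Real.sqrt (π / (1 / (2 * σ ^ 2) - a))
          * rexp ((b + m / σ ^ 2) ^ 2 / (4 * (1 / (2 * σ ^ 2) - a))
              + (c - m ^ 2 / (2 * σ ^ 2)))) := by
  rw [integral_gauss_eq m σ hσ]
  simp_rw [pdf_mul_exp m σ hσ a b c]
  rw [integral_const_mul, integral_rexp_quad (by linarith) _ _]

lemma integrable_gauss_exp_quad (m σ : ℝ) (hσ : 0 < σ) {a : ℝ} (b c : ℝ)
    (ha : a < 1 / (2 * σ ^ 2)) :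
    Integrable (fun x ↦ rexp (a * x ^ 2 + b * x + c))
      (gaussianReal m ⟨σ ^ 2, sq_nonneg σ⟩) := by
  rw [integrable_gauss_iff m σ hσ]
  simp_rw [pdf_mul_exp m σ hσ a b c]
  exact (integrable_rexp_quad (by linarith) _ _).const_mul _

lemma gauss_mgf (σ : ℝ) (hσ : 0 < σ) (c : ℝ) :
    ∫ z, rexp (c * z) ∂(gaussianReal 0 ⟨σ ^ 2, sq_nonneg σ⟩)
      = rexp (c ^ 2 * σ ^ 2 / 2) := by
  have hσ2 : σ ^ 2 ≠ 0 := by positivity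
  rw [show (fun z : ℝ ↦ rexp (c * z)) = fun z ↦ rexp (0 * z ^ 2 + c * z + 0)
    from funext fun z ↦ by ring_nf]
  rw [integral_gauss_exp_quad 0 σ hσ c 0 (by positivity)]
  have h1 : π / (1 / (2 * σ ^ 2) - 0) = 2 * π * σ ^ 2 := by field_simp; ring
  rw [h1, ← mul_assoc, inv_mul_cancel₀ (by positivity : Real.sqrt (2 * π * σ ^ 2) ≠ 0), one_mul]
  congr 1
  field_simp
  ring

lemma gauss_mgf_integrable (σ : ℝ) (hσ : 0 < σ) (c : ℝ) :
    Integrable (fun z ↦ rexp (c * z)) (gaussianReal 0 ⟨σ ^ 2, sq_nonneg σ⟩) := by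
  rw [show (fun z : ℝ ↦ rexp (c * z)) = fun z ↦ rexp (0 * z ^ 2 + c * z + 0)
    from funext fun z ↦ by ring_nf]
  exact integrable_gauss_exp_quad 0 σ hσ c 0 (by positivity)

lemma gauss_sq (d yc σ k : ℝ) (hσ : 0 < σ) (hk : 0 < k) :
    ∫ t, rexp (-(d + t) ^ 2 * k) ∂(gaussianReal yc ⟨σ ^ 2, sq_nonneg σ⟩)
      = rexp (-(d + yc) ^ 2 * k / (1 + 2 * k * σ ^ 2)
          - 1 / 2 * Real.log (1 + 2 * k * σ ^ 2)) := by
  have hσ2 : (0:ℝ) < σ ^ 2 := by positivity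
  have hR : (0:ℝ) < 1 + 2 * k * σ ^ 2 := by positivity
  have hk' : (-k) < 1 / (2 * σ ^ 2) := by
    have : (0:ℝ) < 1 / (2 * σ ^ 2) := by positivity
    linarith
  rw [show (fun t : ℝ ↦ rexp (-(d + t) ^ 2 * k))
      = fun t ↦ rexp ((-k) * t ^ 2 + (-2 * d * k) * t + (-d ^ 2 * k))
    from funext fun t ↦ by ring_nf]
  rw [integral_gauss_exp_quad yc σ hσ _ _ hk']
  have hA : 1 / (2 * σ ^ 2) - (-k) = (1 + 2 * k * σ ^ 2) / (2 * σ ^ 2) := by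
    field_simp
    ring
  rw [hA]
  have hco : (Real.sqrt (2 * π * σ ^ 2))⁻¹
      * Real.sqrt (π / ((1 + 2 * k * σ ^ 2) / (2 * σ ^ 2)))
      = rexp (-(1 / 2 * Real.log (1 + 2 * k * σ ^ 2))) := by
    have h2 : π / ((1 + 2 * k * σ ^ 2) / (2 * σ ^ 2)) = (2 * π * σ ^ 2) / (1 + 2 * k * σ ^ 2) := by
      field_simp
    rw [h2, Real.sqrt_div (by positivity) _]
    rw [show -(1 / 2 * Real.log (1 + 2 * k * σ ^ 2))
        = -Real.log (Real.sqrt (1 + 2 * k * σ ^ 2)) by rw [Real.log_sqrt hR.le]; ring]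
    rw [Real.exp_neg, Real.exp_log (Real.sqrt_pos.mpr hR)]
    field_simp
  rw [← mul_assoc, hco, ← Real.exp_add]
  congr 1
  field_simp
  ring

/-- Single-period informed investor: expected CARA utility with strategy
`φ(Y) = (μ+Y)/(γσ_Z²)` under `Y ~ N(y, σ_Y²)`, `Z ~ N(0, σ_Z²)` independent. -/
theorem informed_expected_utility
    (γ σY σZ μ x C y : ℝ) (hγ : 0 < γ) (hY : 0 < σY) (hZ : 0 < σZ) :
    ∫ p : ℝ × ℝ,
        (-Real.exp (-γ * (x - C + ((μ + p.1) / (γ * σZ ^ 2)) * (μ + p.1 + p.2))))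
        ∂((gaussianReal y ⟨σY ^ 2, sq_nonneg σY⟩).prod
            (gaussianReal 0 ⟨σZ ^ 2, sq_nonneg σZ⟩))
      = -Real.exp (-γ * (x - C) - (μ + y) ^ 2 / (2 * (σY ^ 2 + σZ ^ 2))
          - (1 / 2) * Real.log (1 + σY ^ 2 / σZ ^ 2)) := by
  have hσZ2 : (0:ℝ) < σZ ^ 2 := by positivity
  have hσY2 : (0:ℝ) < σY ^ 2 := by positivity
  haveI : IsProbabilityMeasure (gaussianReal 0 ⟨σZ ^ 2, sq_nonneg σZ⟩) :=
    instIsProbabilityMeasureGaussianReal _ _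
  haveI : IsProbabilityMeasure (gaussianReal y ⟨σY ^ 2, sq_nonneg σY⟩) :=
    instIsProbabilityMeasureGaussianReal _ _
  have hfun : ∀ p : ℝ × ℝ,
      (-Real.exp (-γ * (x - C + ((μ + p.1) / (γ * σZ ^ 2)) * (μ + p.1 + p.2))))
        = -(rexp (-γ * (x - C) - (μ + p.1) ^ 2 / σZ ^ 2)
            * rexp ((-(μ + p.1) / σZ ^ 2) * p.2)) := by
    intro p
    rw [← Real.exp_add]
    congr 1
    field_simp
    ring
  simp_rw [hfun]
  have hint : Integrable
      (fun p : ℝ × ℝ ↦ -(rexp (-γ * (x - C) - (μ + p.1) ^ 2 / σZ ^ 2)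
          * rexp ((-(μ + p.1) / σZ ^ 2) * p.2)))
      ((gaussianReal y ⟨σY ^ 2, sq_nonneg σY⟩).prod
          (gaussianReal 0 ⟨σZ ^ 2, sq_nonneg σZ⟩)) := by
    have hmeas : AEStronglyMeasurable
        (fun p : ℝ × ℝ ↦ -(rexp (-γ * (x - C) - (μ + p.1) ^ 2 / σZ ^ 2)
            * rexp ((-(μ + p.1) / σZ ^ 2) * p.2)))
        ((gaussianReal y ⟨σY ^ 2, sq_nonneg σY⟩).prod
            (gaussianReal 0 ⟨σZ ^ 2, sq_nonneg σZ⟩)) := by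
      apply Continuous.aestronglyMeasurable
      fun_prop
    rw [integrable_prod_iff hmeas]
    constructor
    · refine Filter.Eventually.of_forall fun t ↦ ?_
      exact (((gauss_mgf_integrable σZ hZ (-(μ + t) / σZ ^ 2)).const_mul
          (rexp (-γ * (x - C) - (μ + t) ^ 2 / σZ ^ 2))).neg).congr
        (Filter.Eventually.of_forall fun z ↦ rfl)
    · have heq : (fun t : ℝ ↦ ∫ z, ‖-(rexp (-γ * (x - C) - (μ + t) ^ 2 / σZ ^ 2)
            * rexp ((-(μ + t) / σZ ^ 2) * z))‖ ∂(gaussianReal 0 ⟨σZ ^ 2, sq_nonneg σZ⟩))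
          = fun t ↦ rexp ((-(1 / (2 * σZ ^ 2))) * t ^ 2 + (-μ / σZ ^ 2) * t
              + (-γ * (x - C) - μ ^ 2 / (2 * σZ ^ 2))) := by
        funext t
        simp only [norm_neg, norm_mul, Real.norm_eq_abs, Real.abs_exp]
        rw [integral_const_mul, gauss_mgf σZ hZ _, ← Real.exp_add]
        congr 1
        field_simp
        ring
      rw [heq]
      refine integrable_gauss_exp_quad y σY hY _ _ ?_
      have h1 : (0:ℝ) < 1 / (2 * σY ^ 2) := by positivity
      have h2 : (0:ℝ) < 1 / (2 * σZ ^ 2) := by positivity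
      linarith
  rw [MeasureTheory.integral_prod _ hint]
  have hinner : ∀ t : ℝ,
      (∫ z, -(rexp (-γ * (x - C) - (μ + t) ^ 2 / σZ ^ 2)
          * rexp ((-(μ + t) / σZ ^ 2) * z)) ∂(gaussianReal 0 ⟨σZ ^ 2, sq_nonneg σZ⟩))
        = -(rexp (-γ * (x - C)) * rexp (-(μ + t) ^ 2 * (1 / (2 * σZ ^ 2)))) := by
    intro t
    rw [integral_neg, integral_const_mul, gauss_mgf σZ hZ _, ← Real.exp_add, ← Real.exp_add]
    congr 2
    field_simp
    ring
  simp_rw [hinner]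
  rw [integral_neg, integral_const_mul,
    gauss_sq μ y σY (1 / (2 * σZ ^ 2)) hY (by positivity), ← Real.exp_add]
  congr 2
  have hR : 1 + 2 * (1 / (2 * σZ ^ 2)) * σY ^ 2 = 1 + σY ^ 2 / σZ ^ 2 := by
    field_simp
  rw [hR]
  have h2 : -(μ + y) ^ 2 * (1 / (2 * σZ ^ 2)) / (1 + σY ^ 2 / σZ ^ 2)
      = -((μ + y) ^ 2 / (2 * (σY ^ 2 + σZ ^ 2))) := by
    have hd : (0:ℝ) < 1 + σY ^ 2 / σZ ^ 2 := by positivity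
    field_simp
    ring
  rw [h2]
  ring
end

section
/- The unique solution on [0,T] of the linear ODE A'(t) = 1/(2σ_z²) + (2σ_y/σ_z)·tanh((σ_y/σ_z)t)·A(t) with terminal condition A(T) = 0 is A(t) = -sinh((σ_y/σ_z)(T-t))·cosh((σ_y/σ_z)t) / (2σ_yσ_z·cosh((σ_y/σ_z)T)). -/
open Real Set

lemma aux_deriv (σy σz T : ℝ) (hy : 0 < σy) (hz : 0 < σz) (t : ℝ) :
    HasDerivAt
      (fun t : ℝ => -Real.sinh ((σy / σz) * (T - t)) * Real.cosh ((σy / σz) * t)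
          / (2 * σy * σz * Real.cosh ((σy / σz) * T)))
      (1 / (2 * σz ^ 2) + (2 * σy / σz) * Real.tanh ((σy / σz) * t)
        * (-Real.sinh ((σy / σz) * (T - t)) * Real.cosh ((σy / σz) * t)
            / (2 * σy * σz * Real.cosh ((σy / σz) * T)))) t := by
  set c := σy / σz with hcdef
  have hc : HasDerivAt (fun t : ℝ => c * (T - t)) (c * (0 - 1)) t :=
    ((hasDerivAt_const t T).sub (hasDerivAt_id t)).const_mul c
  have h2 : HasDerivAt (fun t : ℝ => Real.sinh (c * (T - t)))
      (Real.cosh (c * (T - t)) * (c * (0 - 1))) t := hc.sinh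
  have h3 : HasDerivAt (fun t : ℝ => Real.cosh (c * t))
      (Real.sinh (c * t) * (c * 1)) t := ((hasDerivAt_id t).const_mul c).cosh
  have h4 := (h2.neg.mul h3).div_const (2 * σy * σz * Real.cosh (c * T))
  refine h4.congr_deriv ?_
  symm
  simp only [Pi.neg_apply]
  have hch := Real.cosh_pos (c * t)
  have hCT := Real.cosh_pos (c * T)
  have hsq := Real.cosh_sq_sub_sinh_sq (c * t)
  have hid : c * (T - t) = c * T - c * t := by ring
  rw [Real.tanh_eq_sinh_div_cosh, hid, Real.sinh_sub, Real.cosh_sub]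
  set s := Real.sinh (c * t)
  set ch := Real.cosh (c * t)
  set S := Real.sinh (c * T)
  set C := Real.cosh (c * T)
  rw [hcdef]
  field_simp
  linear_combination (-C) * hsq

/-- The unique solution on `[0,T]` of the linear ODE
`A'(t) = 1/(2σ_z²) + (2σ_y/σ_z) tanh((σ_y/σ_z)t) A(t)` with `A(T) = 0` is
`A(t) = -sinh((σ_y/σ_z)(T-t)) cosh((σ_y/σ_z)t) / (2σ_yσ_z cosh((σ_y/σ_z)T))`. -/
theorem linear_ode_uninformed_A
    (σy σz T : ℝ) (hy : 0 < σy) (hz : 0 < σz) (hT : 0 < T) :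
    (∀ t ∈ Icc (0 : ℝ) T,
      HasDerivAt
        (fun t : ℝ => -Real.sinh ((σy / σz) * (T - t)) * Real.cosh ((σy / σz) * t)
            / (2 * σy * σz * Real.cosh ((σy / σz) * T)))
        (1 / (2 * σz ^ 2) + (2 * σy / σz) * Real.tanh ((σy / σz) * t)
          * (-Real.sinh ((σy / σz) * (T - t)) * Real.cosh ((σy / σz) * t)
              / (2 * σy * σz * Real.cosh ((σy / σz) * T)))) t) ∧
    (-Real.sinh ((σy / σz) * (T - T)) * Real.cosh ((σy / σz) * T)
        / (2 * σy * σz * Real.cosh ((σy / σz) * T)) = 0) ∧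
    (∀ A : ℝ → ℝ,
      (∀ t ∈ Icc (0 : ℝ) T,
        HasDerivAt A
          (1 / (2 * σz ^ 2) + (2 * σy / σz) * Real.tanh ((σy / σz) * t) * A t) t) →
      A T = 0 →
      ∀ t ∈ Icc (0 : ℝ) T,
        A t = -Real.sinh ((σy / σz) * (T - t)) * Real.cosh ((σy / σz) * t)
            / (2 * σy * σz * Real.cosh ((σy / σz) * T))) := by
  set c := σy / σz with hcdef
  set B : ℝ → ℝ := fun t : ℝ => -Real.sinh (c * (T - t)) * Real.cosh (c * t)
      / (2 * σy * σz * Real.cosh (c * T)) with hBdef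
  have hterm : B T = 0 := by simp [hBdef]
  refine ⟨fun t _ => aux_deriv σy σz T hy hz t, hterm, ?_⟩
  intro A hA hAT t ht
  -- difference g := A - B satisfies g' = 2c tanh(ct) g
  set g : ℝ → ℝ := fun t => A t - B t with hgdef
  have hg : ∀ u ∈ Icc (0:ℝ) T,
      HasDerivAt g ((2 * σy / σz) * Real.tanh (c * u) * g u) u := by
    intro u hu
    have := (hA u hu).sub (aux_deriv σy σz T hy hz u)
    refine this.congr_deriv ?_
    symm
    simp only [hgdef]
    ring
  -- h := g / cosh(ct)^2 has zero derivative
  set h : ℝ → ℝ := fun t => g t / Real.cosh (c * t) ^ 2 with hhdef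
  have hh : ∀ u ∈ Icc (0:ℝ) T, HasDerivAt h 0 u := by
    intro u hu
    have hden : Real.cosh (c * u) ^ 2 ≠ 0 := by positivity
    have hd : HasDerivAt (fun t : ℝ => Real.cosh (c * t) ^ 2)
        ((2 : ℕ) * Real.cosh (c * u) ^ 1 * (Real.sinh (c * u) * (c * 1))) u :=
      (((hasDerivAt_id u).const_mul c).cosh).pow 2
    have := (hg u hu).div hd hden
    refine this.congr_deriv ?_
    symm
    rw [Real.tanh_eq_sinh_div_cosh, hcdef]
    have hch := (Real.cosh_pos (c * u)).ne'
    rw [hcdef] at hch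
    field_simp
    ring
  -- hence h is constant on [0,T]
  have hcont : ContinuousOn h (Icc 0 T) := fun u hu =>
    ((hh u hu).continuousAt).continuousWithinAt
  have hconst : ∀ u ∈ Icc (0:ℝ) T, h u = h 0 := by
    apply constant_of_has_deriv_right_zero hcont
    intro u hu
    exact ((hh u (Ico_subset_Icc_self hu)).hasDerivWithinAt)
  have hT0 : h T = 0 := by
    simp only [hhdef, hgdef]
    rw [hAT, hterm]
    simp
  have h0 : h 0 = 0 := by
    rw [← hconst T (right_mem_Icc.mpr hT.le)]; exact hT0
  have : h t = 0 := by rw [hconst t ht, h0]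
  have hch : Real.cosh (c * t) ^ 2 ≠ 0 := by positivity
  have hg0 : g t = 0 := by
    have := this
    simp only [hhdef] at this
    field_simp at this
    simpa using this
  have : A t - B t = 0 := hg0
  linarith [this]
end

section
/- With A_{UI}(t) = -sinh(k(T-t))cosh(kt)/(2σ_yσ_z cosh(kT)) where k = σ_y/σ_z, the unique solution on [0,T] of B'(t) = -σ_y²·tanh²(kt)·A_{UI}(t) with B(T) = 0 is B_{UI}(t) = (σ_y/(4σ_z))(T-t)tanh(kT) + (1/2)log(cosh(kt)/cosh(kT)) + sinh(k(T-t))sinh(kt)/(4cosh(kT)). -/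
open Real Set

/-- With `k = σ_y/σ_z` and `A_UI(t) = -sinh(k(T-t))cosh(kt)/(2σ_yσ_z cosh(kT))`,
the unique solution on `[0,T]` of `B'(t) = -σ_y² tanh²(kt) A_UI(t)` with `B(T)=0` is
`B_UI(t) = (σ_y/(4σ_z))(T-t)tanh(kT) + (1/2)log(cosh(kt)/cosh(kT))
  + sinh(k(T-t))sinh(kt)/(4cosh(kT))`. -/
theorem linear_ode_uninformed_B
    (σy σz T : ℝ) (hy : 0 < σy) (hz : 0 < σz) (hT : 0 < T) :
    let k := σy / σz
    let AUI : ℝ → ℝ := fun t =>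
      -Real.sinh (k * (T - t)) * Real.cosh (k * t) / (2 * σy * σz * Real.cosh (k * T))
    let BUI : ℝ → ℝ := fun t =>
      (σy / (4 * σz)) * (T - t) * Real.tanh (k * T)
        + (1 / 2) * Real.log (Real.cosh (k * t) / Real.cosh (k * T))
        + Real.sinh (k * (T - t)) * Real.sinh (k * t) / (4 * Real.cosh (k * T))
    (∀ t ∈ Icc (0 : ℝ) T,
      HasDerivAt BUI (-σy ^ 2 * Real.tanh (k * t) ^ 2 * AUI t) t) ∧
    BUI T = 0 ∧
    (∀ B : ℝ → ℝ,
      (∀ t ∈ Icc (0 : ℝ) T,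
        HasDerivAt B (-σy ^ 2 * Real.tanh (k * t) ^ 2 * AUI t) t) →
      B T = 0 →
      ∀ t ∈ Icc (0 : ℝ) T, B t = BUI t) := by
  intro k AUI BUI
  have hk : 0 < k := div_pos hy hz
  have hCT : Real.cosh (k * T) ≠ 0 := (Real.cosh_pos _).ne'
  have hBrw : BUI = fun t =>
      (σy / (4 * σz)) * (T - t) * Real.tanh (k * T)
        + (1 / 2) * (Real.log (Real.cosh (k * t)) - Real.log (Real.cosh (k * T)))
        + Real.sinh (k * (T - t)) * Real.sinh (k * t) / (4 * Real.cosh (k * T)) := by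
    funext s
    simp only [BUI]
    rw [Real.log_div (Real.cosh_pos _).ne' hCT]
  have key : ∀ t : ℝ, HasDerivAt BUI (-σy ^ 2 * Real.tanh (k * t) ^ 2 * AUI t) t := by
    intro t
    have hct : Real.cosh (k * t) ≠ 0 := (Real.cosh_pos _).ne'
    have hkt : HasDerivAt (fun x : ℝ => k * x) k t := by
      simpa using (hasDerivAt_id t).const_mul k
    have hktT : HasDerivAt (fun x : ℝ => k * (T - x)) (k * -1) t :=
      ((hasDerivAt_id t).const_sub T).const_mul k
    have h1 : HasDerivAt (fun x : ℝ => (σy / (4 * σz)) * (T - x) * Real.tanh (k * T))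
        ((σy / (4 * σz)) * -1 * Real.tanh (k * T)) t :=
      (((hasDerivAt_id t).const_sub T).const_mul (σy / (4 * σz))).mul_const _
    have hcosh : HasDerivAt (fun x : ℝ => Real.cosh (k * x)) (Real.sinh (k * t) * k) t :=
      (Real.hasDerivAt_cosh (k * t)).comp t hkt
    have h2 : HasDerivAt
        (fun x : ℝ => (1 / 2) * (Real.log (Real.cosh (k * x)) - Real.log (Real.cosh (k * T))))
        ((1 / 2) * (Real.sinh (k * t) * k / Real.cosh (k * t))) t :=
      ((hcosh.log hct).sub_const _).const_mul _
    have hs1 : HasDerivAt (fun x : ℝ => Real.sinh (k * (T - x)))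
        (Real.cosh (k * (T - t)) * (k * -1)) t :=
      by have h := (Real.hasDerivAt_sinh (k * (T - t))).comp t hktT; exact h
    have hs2 : HasDerivAt (fun x : ℝ => Real.sinh (k * x)) (Real.cosh (k * t) * k) t :=
      (Real.hasDerivAt_sinh (k * t)).comp t hkt
    have h3 : HasDerivAt
        (fun x : ℝ => Real.sinh (k * (T - x)) * Real.sinh (k * x) / (4 * Real.cosh (k * T)))
        ((Real.cosh (k * (T - t)) * (k * -1) * Real.sinh (k * t)
          + Real.sinh (k * (T - t)) * (Real.cosh (k * t) * k)) / (4 * Real.cosh (k * T))) t :=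
      ((hs1).mul hs2).div_const _
    have hsum := (h1.add h2).add h3
    rw [hBrw]
    refine hsum.congr_deriv ?_
    symm
    simp only [AUI, k, Real.tanh_eq_sinh_div_cosh]
    rw [show σy / σz * (T - t) = σy / σz * T - σy / σz * t by ring,
        Real.sinh_sub, Real.cosh_sub]
    have hsq : Real.cosh (σy / σz * t) ^ 2 = Real.sinh (σy / σz * t) ^ 2 + 1 :=
      Real.cosh_sq _
    have hct' : Real.cosh (σy / σz * t) ≠ 0 := (Real.cosh_pos _).ne'
    have hCT' : Real.cosh (σy / σz * T) ≠ 0 := (Real.cosh_pos _).ne'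
    set s1 := Real.sinh (σy / σz * t) with hs1d
    set c1 := Real.cosh (σy / σz * t) with hc1d
    set S1 := Real.sinh (σy / σz * T) with hS1d
    set C1 := Real.cosh (σy / σz * T) with hC1d
    field_simp
    linear_combination (4 * s1 * C1 - 2 * S1 * c1) * hsq
  have hBT : BUI T = 0 := by
    simp only [BUI, sub_self, mul_zero, zero_mul, mul_zero, div_self hCT, Real.log_one,
      Real.sinh_zero, zero_mul, zero_div, add_zero, zero_add, mul_zero]
  refine ⟨fun t _ => key t, hBT, ?_⟩
  intro B hB hBT' t ht
  set g : ℝ → ℝ := fun t => B t - BUI t with hg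
  have hgderiv : ∀ x ∈ Icc (0 : ℝ) T, HasDerivAt g 0 x := by
    intro x hx
    have h := (hB x hx).sub (key x)
    simp only [sub_self] at h
    exact h
  have hgcont : ContinuousOn g (Icc 0 T) := fun x hx => ((hgderiv x hx).continuousAt).continuousWithinAt
  have hconst : ∀ x ∈ Icc (0 : ℝ) T, g x = g 0 := by
    intro x hx
    exact constant_of_has_deriv_right_zero hgcont
      (fun y hy => ((hgderiv y ⟨hy.1, hy.2.le⟩).hasDerivWithinAt)) x hx
  have hgT : g T = 0 := by simp [hg, hBT', hBT]
  have hg0 : g 0 = 0 := by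
    have := hconst T ⟨hT.le, le_rfl⟩
    rw [hgT] at this; exact this.symm
  have := hconst t ht
  rw [hg0] at this
  simpa [hg, sub_eq_zero] using this
end

section
/- The function κ(t,u) = -σ_y·tanh((σ_y/σ_z)u)·1_{[0,t]}(u) satisfies the integral equation σ_z·κ(t,u) - ∫₀ᵘ κ(t,v)κ(u,v) dv = -σ_y²·u for all 0 ≤ u ≤ t ≤ T. -/
open Real Set intervalIntegral

lemma hasDerivAt_tanh' (x : ℝ) : HasDerivAt Real.tanh (1 - Real.tanh x ^ 2) x := by
  have h : HasDerivAt (fun y => Real.sinh y / Real.cosh y)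
      ((Real.cosh x * Real.cosh x - Real.sinh x * Real.sinh x) / (Real.cosh x) ^ 2) x := by
    exact (Real.hasDerivAt_sinh x).div (Real.hasDerivAt_cosh x) (ne_of_gt (Real.cosh_pos x))
  have heq : (Real.cosh x * Real.cosh x - Real.sinh x * Real.sinh x) / (Real.cosh x) ^ 2
      = 1 - Real.tanh x ^ 2 := by
    rw [Real.tanh_eq_sinh_div_cosh]
    have hc := Real.cosh_pos x
    have := Real.cosh_sq_sub_sinh_sq x
    field_simp
  have : (fun y => Real.sinh y / Real.cosh y) = Real.tanh := by
    funext y; rw [Real.tanh_eq_sinh_div_cosh]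
  rw [this, heq] at h
  exact h

lemma tanh_sq_integral (k u : ℝ) (hk : 0 < k) :
    ∫ v in (0:ℝ)..u, Real.tanh (k * v) ^ 2 = u - Real.tanh (k * u) / k := by
  have key : ∀ x : ℝ, HasDerivAt (fun v => v - Real.tanh (k * v) / k)
      (Real.tanh (k * x) ^ 2) x := by
    intro x
    have h1 : HasDerivAt (fun v : ℝ => k * v) k x := by
      simpa using (hasDerivAt_id x).const_mul k
    have h2 : HasDerivAt (fun v => Real.tanh (k * v)) ((1 - Real.tanh (k * x) ^ 2) * k) x :=
      (hasDerivAt_tanh' (k * x)).comp x h1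
    have h3 : HasDerivAt (fun v => Real.tanh (k * v) / k)
        ((1 - Real.tanh (k * x) ^ 2) * k / k) x := h2.div_const k
    have h4 := (hasDerivAt_id x).sub h3
    have : 1 - (1 - Real.tanh (k * x) ^ 2) * k / k = Real.tanh (k * x) ^ 2 := by
      field_simp
      ring
    rw [this] at h4
    exact h4
  have := intervalIntegral.integral_eq_sub_of_hasDerivAt (f := fun v => v - Real.tanh (k * v) / k)
    (f' := fun v => Real.tanh (k * v) ^ 2) (a := 0) (b := u)
    (fun x _ => key x)
    (by
      apply Continuous.intervalIntegrable
      have : Continuous (fun v => Real.tanh (k * v)) := by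
        rw [continuous_iff_continuousAt]
        intro x
        exact ((hasDerivAt_tanh' (k * x)).comp x
          (by simpa using (hasDerivAt_id x).const_mul k)).continuousAt
      exact this.pow 2)
  simpa using this

/-- The kernel `κ(t,u) = -σ_y tanh((σ_y/σ_z)u) 1_{[0,t]}(u)` solves the Volterra
integral equation `σ_z κ(t,u) - ∫₀ᵘ κ(t,v)κ(u,v) dv = -σ_y² u` for `0 ≤ u ≤ t ≤ T`. -/
theorem filtering_kernel_equation
    (σy σz T : ℝ) (hy : 0 < σy) (hz : 0 < σz) (hT : 0 < T) :
    let κ : ℝ → ℝ → ℝ := fun t u =>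
      Set.indicator (Icc (0 : ℝ) t) (fun u => -σy * Real.tanh ((σy / σz) * u)) u
    ∀ u t : ℝ, 0 ≤ u → u ≤ t → t ≤ T →
      σz * κ t u - ∫ v in (0 : ℝ)..u, κ t v * κ u v = -σy ^ 2 * u := by
  intro κ u t hu hut htT
  set k := σy / σz with hk
  have hkpos : 0 < k := div_pos hy hz
  have hκtu : κ t u = -σy * Real.tanh (k * u) := by
    simp [κ, Set.indicator_of_mem, Set.mem_Icc.mpr ⟨hu, hut⟩]; left; rfl
  have hint : (∫ v in (0:ℝ)..u, κ t v * κ u v)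
      = ∫ v in (0:ℝ)..u, σy ^ 2 * Real.tanh (k * v) ^ 2 := by
    apply intervalIntegral.integral_congr
    intro v hv
    rw [Set.uIcc_of_le hu] at hv
    have hv0 : 0 ≤ v := hv.1
    have hvu : v ≤ u := hv.2
    have h1 : κ t v = -σy * Real.tanh (k * v) := by
      simp [κ, Set.indicator_of_mem, Set.mem_Icc.mpr ⟨hv0, hvu.trans hut⟩]; left; rfl
    have h2 : κ u v = -σy * Real.tanh (k * v) := by
      simp [κ, Set.indicator_of_mem, Set.mem_Icc.mpr ⟨hv0, hvu⟩]; left; rfl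
    simp only [h1, h2]; ring
  rw [hκtu, hint, intervalIntegral.integral_const_mul, tanh_sq_integral k u hkpos]
  have hkk : σy ^ 2 / k = σy * σz := by
    rw [hk]; field_simp
  field_simp
  have h6 : σz * k = σy := by rw [hk]; field_simp
  linear_combination (-(σy * Real.tanh (k * u))) * h6 + ((σy ^ 2 - σy) * Real.tanh (k * u)) * (mul_inv_cancel₀ hz.ne')
end

section
/- The function B_F(t) = γ∫_{τ_ℓ}^T c(u) du + γ∫_t^{τ_ℓ} (c̄ - ℓ(u)) du + (1/2)log(cosh(kt)/cosh(kT)) satisfies the ODE B_F'(t) = -σ_y² tanh²(kt)·A_{UI}(t) on [0, τ_ℓ], where A_{UI}(t) = -sinh(k(T-t))cosh(kt)/(2σ_yσ_z cosh(kT)), c̄ = (σ_y/(4γσ_z))tanh(kT), ℓ(t) = σ_y sinh(k(T-2t))/(4γσ_z cosh(kT)), and k = σ_y/σ_z. -/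
open Real Set intervalIntegral

/-- The candidate value-function coefficient
`B_F(t) = γ∫_{τ_ℓ}^T c + γ∫_t^{τ_ℓ}(c̄ - ℓ) + (1/2)log(cosh(kt)/cosh(kT))` solves the
continuation-region ODE `B_F'(t) = -σ_y² tanh²(kt) A_UI(t)` on `[0,τ_ℓ]`. -/
theorem BF_solves_continuation_ode
    (σy σz γ T τℓ : ℝ) (hy : 0 < σy) (hz : 0 < σz) (hγ : 0 < γ) (hT : 0 < T)
    (hτ : τℓ ∈ Icc (0 : ℝ) T) (c : ℝ → ℝ) (hc : ContinuousOn c (Icc 0 T)) :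
    let k := σy / σz
    let cbar : ℝ := (σy / (4 * γ * σz)) * Real.tanh (k * T)
    let ℓ : ℝ → ℝ := fun t =>
      σy * Real.sinh (k * (T - 2 * t)) / (4 * γ * σz * Real.cosh (k * T))
    let AUI : ℝ → ℝ := fun t =>
      -Real.sinh (k * (T - t)) * Real.cosh (k * t) / (2 * σy * σz * Real.cosh (k * T))
    let BF : ℝ → ℝ := fun t =>
      γ * (∫ u in τℓ..T, c u) + γ * (∫ u in t..τℓ, (cbar - ℓ u))
        + (1 / 2) * Real.log (Real.cosh (k * t) / Real.cosh (k * T))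
    ∀ t ∈ Icc (0 : ℝ) τℓ,
      HasDerivAt BF (-σy ^ 2 * Real.tanh (k * t) ^ 2 * AUI t) t := by
  intro k cbar ℓ AUI BF t ht
  have hcont : Continuous fun u => cbar - ℓ u := by fun_prop
  -- derivative of the integral part
  have h1 : HasDerivAt (fun s => γ * ∫ u in s..τℓ, (cbar - ℓ u))
      (γ * (-(cbar - ℓ t))) t := by
    exact (intervalIntegral.integral_hasDerivAt_left
      (hcont.intervalIntegrable _ _)
      (hcont.stronglyMeasurableAtFilter _ _)
      hcont.continuousAt).const_mul γ
  -- derivative of the log part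
  have hkt : HasDerivAt (fun s : ℝ => k * s) k t := by
    simpa using (hasDerivAt_id t).const_mul k
  have hcosh : HasDerivAt (fun s : ℝ => Real.cosh (k * s)) (Real.sinh (k * t) * k) t :=
    (Real.hasDerivAt_cosh (k * t)).comp t hkt
  have hCt : (0:ℝ) < Real.cosh (k * t) := Real.cosh_pos _
  have hCT : (0:ℝ) < Real.cosh (k * T) := Real.cosh_pos _
  have h2 : HasDerivAt (fun s => (1 / 2 : ℝ) * Real.log (Real.cosh (k * s) / Real.cosh (k * T)))
      ((1 / 2) * ((Real.cosh (k * t))⁻¹ * (Real.sinh (k * t) * k))) t := by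
    have hlog : HasDerivAt (fun s => Real.log (Real.cosh (k * s)))
        ((Real.cosh (k * t))⁻¹ * (Real.sinh (k * t) * k)) t :=
      by have := (Real.hasDerivAt_log hCt.ne').comp t hcosh; exact this
    have hsub : HasDerivAt
        (fun s => Real.log (Real.cosh (k * s)) - Real.log (Real.cosh (k * T)))
        ((Real.cosh (k * t))⁻¹ * (Real.sinh (k * t) * k)) t := hlog.sub_const _
    refine (hsub.const_mul (1/2 : ℝ)).congr_of_eventuallyEq ?_
    filter_upwards with s
    rw [Real.log_div (ne_of_gt (Real.cosh_pos _)) (ne_of_gt (Real.cosh_pos _))]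
  have hBF : HasDerivAt BF
      (γ * (∫ u in τℓ..T, c u) * 0 + γ * (-(cbar - ℓ t))
        + (1 / 2) * ((Real.cosh (k * t))⁻¹ * (Real.sinh (k * t) * k))) t := by
    have h0 : HasDerivAt (fun _ : ℝ => γ * (∫ u in τℓ..T, c u))
        (γ * (∫ u in τℓ..T, c u) * 0) t := by
      simpa using (hasDerivAt_const t (γ * (∫ u in τℓ..T, c u)))
    exact (h0.add h1).add h2
  convert hBF using 1
  show -σy ^ 2 * Real.tanh (k * t) ^ 2 * AUI t
      = γ * (∫ u in τℓ..T, c u) * 0 + γ * (-(cbar - ℓ t))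
        + 1 / 2 * ((Real.cosh (k * t))⁻¹ * (Real.sinh (k * t) * k))
  -- algebraic identity via exponentials
  simp only [AUI, cbar, ℓ]
  have e1 : k * (T - t) = k * T - k * t := by ring
  have e2 : k * (T - 2 * t) = k * T - (k * t + k * t) := by ring
  rw [e1, e2]
  simp only [Real.tanh_eq_sinh_div_cosh, Real.sinh_eq, Real.cosh_eq, Real.exp_sub,
    Real.exp_add, Real.exp_neg, mul_zero, zero_add]
  have ha : (0:ℝ) < Real.exp (k * t) := Real.exp_pos _
  have hb : (0:ℝ) < Real.exp (k * T) := Real.exp_pos _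
  have hab : (0:ℝ) < Real.exp (k * t) ^ 2 * Real.exp (k * T) ^ 2 := by positivity
  have hk : k = σy / σz := rfl
  set a := Real.exp (k * t) with haa
  set b := Real.exp (k * T) with hbb
  have hden1 : a + a⁻¹ ≠ 0 := by positivity
  have hden2 : b + b⁻¹ ≠ 0 := by positivity
  rw [hk]
  field_simp
  ring
end
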